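/- arXiv:2506.20672 — 3 statements merged into one kernel-verified Lean document; each statement's English description precedes it below -/
import Mathlib

section
/- Let $0 < c_1 \leq c_2 \leq \cdots \leq c_k$ be real numbers with $c_1 < c_k$, let $\alpha$ be a real number with $-c_k < \alpha \leq c_k$, set $c_0 = 0$ and define $w_i = \frac{1}{i+1}\left(\sum_{j=0}^{i-1} c_{k-j} - \alpha\right)$ for $i = 1, \ldots, k$. Let $i_0$ be the smallest integer in $\{1, \ldots, k\}$ such that $w_{i_0} \geq c_{k-i_0}$ (which exists since $w_k \geq 0 = c_0$). Then $w_{i_0} \in [c_{k-i_0}, c_{k-i_0+1})$. -/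
theorem least_index_in_interval (k : ℕ) (c : ℕ → ℝ) (α : ℝ)
    (hc0 : c 0 = 0) (hpos : 0 < c 1)
    (hmono : ∀ i j, 1 ≤ i → i ≤ j → j ≤ k → c i ≤ c j)
    (hlt : c 1 < c k) (hα1 : -c k < α) (hα2 : α ≤ c k)
    (w : ℕ → ℝ)
    (hw : ∀ i, w i = (1 / (i + 1)) * ((∑ j ∈ Finset.range i, c (k - j)) - α))
    (i0 : ℕ) (hi0a : 1 ≤ i0) (hi0b : i0 ≤ k)
    (hi0c : c (k - i0) ≤ w i0)
    (hi0min : ∀ i, 1 ≤ i → i < i0 → w i < c (k - i)) :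
    c (k - i0) ≤ w i0 ∧ w i0 < c (k - i0 + 1) := by
  refine ⟨hi0c, ?_⟩
  rcases eq_or_lt_of_le hi0a with h1 | h2
  · -- i0 = 1
    subst h1
    rw [hw 1]
    simp only [Finset.sum_range_one, Nat.sub_zero]
    have hk1 : k - 1 + 1 = k := Nat.succ_pred_eq_of_pos (lt_of_lt_of_le hi0a hi0b)
    rw [hk1]
    push_cast
    linarith
  · -- i0 ≥ 2
    obtain ⟨m, rfl⟩ : ∃ m, i0 = m + 1 := ⟨i0 - 1, (Nat.succ_pred_eq_of_pos (by omega)).symm⟩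
    have hm1 : 1 ≤ m := by omega
    have hmlt := hi0min m hm1 (by omega)
    have hkm : k - m = k - (m + 1) + 1 := by omega
    rw [hkm] at hmlt
    have hwm := hw m
    have hwm1 := hw (m + 1)
    rw [Finset.sum_range_succ] at hwm1
    have hkm2 : k - m = k - (m + 1) + 1 := by omega
    rw [hkm2] at hwm1
    set C := c (k - (m + 1) + 1)
    have hmpos : (0:ℝ) < (m:ℝ) + 1 := by positivity
    have hsum : (∑ j ∈ Finset.range m, c (k - j)) - α = ((m:ℝ) + 1) * w m := by
      rw [hwm]; field_simp
    have : w (m + 1) = (1 / ((m:ℝ) + 1 + 1)) * (((m:ℝ) + 1) * w m + C) := by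
      rw [hwm1, show (∑ x ∈ Finset.range m, c (k-x)) + C - α
        = ((∑ j ∈ Finset.range m, c (k-j)) - α) + C by ring, hsum]
      push_cast; ring
    rw [this]
    rw [div_mul_eq_mul_div, one_mul, div_lt_iff₀ (by positivity)]
    nlinarith [hmlt]
end

section
/- Let $0 < c_1 \leq c_2 \leq \cdots \leq c_k$ with $c_1 < c_k$, let $e_1, \ldots, e_r < 0$, and let $\alpha \in (-c_k, c_k]$. Consider the linear program: minimize $w$ over nonnegative reals $w, y_1, \ldots, y_k, z_1, \ldots, z_r$ subject to $y_1 + \cdots + y_k + z_1 + \cdots + z_r = w + \alpha$, $y_i + w \geq c_i$ for all $i$, and $z_i + w \geq e_i$ for all $i$. Set $c_0 = 0$, define $w_i = \frac{1}{i+1}(\sum_{j=0}^{i-1} c_{k-j} - \alpha)$ and let $i_0$ be the smallest index with $w_{i_0} \geq c_{k-i_0}$. Then the optimal value is $w^* = w_{i_0}$, attained at $y_1^* = \cdots = y_{k-i_0}^* = 0$, $y_i^* = c_i - w_{i_0}$ for $i > k - i_0$, and $z_1^* = \cdots = z_r^* = 0$. -/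
/-- Feasibility for the linear program of Proposition 5.1:
variables `W, y 1, …, y k, z 1, …, z r` are nonnegative,
`∑ y i + ∑ z i = W + α`, `y i + W ≥ c i` and `z i + W ≥ e i`. -/
def LPFeasible (k r : ℕ) (c e : ℕ → ℝ) (α : ℝ)
    (W : ℝ) (y z : ℕ → ℝ) : Prop :=
  0 ≤ W ∧
  (∀ i, 1 ≤ i → i ≤ k → 0 ≤ y i ∧ c i ≤ y i + W) ∧
  (∀ i, 1 ≤ i → i ≤ r → 0 ≤ z i ∧ e i ≤ z i + W) ∧
  (∑ i ∈ Finset.Icc 1 k, y i) + (∑ i ∈ Finset.Icc 1 r, z i) = W + α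

theorem lp_optimal_solution (k r : ℕ) (c e : ℕ → ℝ) (α : ℝ)
    (hc0 : c 0 = 0) (hpos : 0 < c 1)
    (hmono : ∀ i j, 1 ≤ i → i ≤ j → j ≤ k → c i ≤ c j)
    (hlt : c 1 < c k) (hα1 : -c k < α) (hα2 : α ≤ c k)
    (he : ∀ i, 1 ≤ i → i ≤ r → e i < 0)
    (w : ℕ → ℝ)
    (hw : ∀ i, w i = (1 / (i + 1)) * ((∑ j ∈ Finset.range i, c (k - j)) - α))
    (i0 : ℕ) (hi0a : 1 ≤ i0) (hi0b : i0 ≤ k)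
    (hi0c : c (k - i0) ≤ w i0)
    (hi0min : ∀ i, 1 ≤ i → i < i0 → w i < c (k - i)) :
    LPFeasible k r c e α (w i0)
      (fun i => if i ≤ k - i0 then 0 else c i - w i0) (fun _ => 0) ∧
    (∀ W y z, LPFeasible k r c e α W y z → w i0 ≤ W) := by
  have hne : ((i0:ℝ) + 1) ≠ 0 := by positivity
  set S : ℝ := ∑ j ∈ Finset.range i0, c (k - j) with hS
  have hkey : S - α = ((i0:ℝ) + 1) * w i0 := by
    rw [hw i0, hS]; field_simp
  -- w i0 ≥ 0
  have hw0 : 0 ≤ w i0 := by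
    rcases eq_or_lt_of_le hi0b with h | h
    · calc (0:ℝ) = c 0 := hc0.symm
        _ = c (k - i0) := by rw [h]; simp
        _ ≤ w i0 := hi0c
    · exact le_trans (le_trans hpos.le (hmono 1 (k - i0) le_rfl (by omega) (by omega))) hi0c
  -- w i0 < c (k - i0 + 1)
  have hwlt : w i0 < c (k - i0 + 1) := by
    rcases eq_or_lt_of_le hi0a with h1 | h1
    · have h1' : i0 = 1 := h1.symm
      subst h1'
      have hk1 : k - 1 + 1 = k := by omega
      rw [hk1, hw 1]
      simp only [Finset.sum_range_one, Nat.sub_zero, Nat.cast_one]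
      nlinarith [hα1]
    · have h2 : 2 ≤ i0 := h1
      have hwprev := hi0min (i0 - 1) (by omega) (by omega)
      have hidx : k - (i0 - 1) = k - i0 + 1 := by omega
      rw [hidx] at hwprev
      have hcast : ((i0 - 1 : ℕ) : ℝ) = (i0 : ℝ) - 1 := by
        push_cast [Nat.cast_sub hi0a]; ring
      have hprev := hw (i0 - 1)
      rw [hcast] at hprev
      have hsplit : S = (∑ j ∈ Finset.range (i0 - 1), c (k - j)) + c (k - i0 + 1) := by
        rw [hS, ← hidx]
        have : i0 = (i0 - 1) + 1 := by omega
        rw [this, Finset.sum_range_succ]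
        congr 1 <;> omega
      have hi0pos : (0:ℝ) < (i0:ℝ) - 1 + 1 := by
        have : (1:ℝ) ≤ (i0:ℝ) := by exact_mod_cast hi0a
        linarith
      have hT : (∑ j ∈ Finset.range (i0 - 1), c (k - j)) - α = ((i0:ℝ) - 1 + 1) * w (i0 - 1) := by
        rw [hprev]; field_simp
      have : ((i0:ℝ) + 1) * w i0 = (i0:ℝ) * w (i0 - 1) + c (k - i0 + 1) := by
        rw [← hkey, hsplit]; linarith [hT]
      have hi0R : (1:ℝ) ≤ (i0:ℝ) := by exact_mod_cast hi0a
      nlinarith [hwprev]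
  -- reindexing sum
  have hsum_eq : ∑ i ∈ Finset.Icc (k - i0 + 1) k, c i = S := by
    rw [hS]
    apply Finset.sum_nbij' (fun i => k - i) (fun j => k - j)
    · intro a ha; simp only [Finset.mem_Icc] at ha; simp only [Finset.mem_range]; omega
    · intro a ha; simp only [Finset.mem_range] at ha; simp only [Finset.mem_Icc]; omega
    · intro a ha; simp only [Finset.mem_Icc] at ha; omega
    · intro a ha; simp only [Finset.mem_range] at ha; omega
    · intro a ha; simp only [Finset.mem_Icc] at ha; congr 1; omega
  have hcard : (Finset.Icc (k - i0 + 1) k).card = i0 := by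
    rw [Nat.card_Icc]; omega
  have hfilter1 : (Finset.Icc 1 k).filter (fun i => i ≤ k - i0) = Finset.Icc 1 (k - i0) := by
    ext x; simp only [Finset.mem_filter, Finset.mem_Icc]; omega
  have hfilter2 : (Finset.Icc 1 k).filter (fun i => ¬ i ≤ k - i0) = Finset.Icc (k - i0 + 1) k := by
    ext x; simp only [Finset.mem_filter, Finset.mem_Icc]; omega
  constructor
  · refine ⟨hw0, ?_, ?_, ?_⟩
    · intro i hi1 hik
      by_cases hcase : i ≤ k - i0
      · simp only [hcase, if_true]
        refine ⟨le_rfl, ?_⟩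
        have : c i ≤ c (k - i0) := hmono i (k - i0) hi1 hcase (by omega)
        linarith [hi0c]
      · simp only [hcase, if_false]
        have hle : c (k - i0 + 1) ≤ c i := hmono (k - i0 + 1) i (by omega) (by omega) hik
        constructor
        · linarith
        · linarith
    · intro i hi1 hir
      refine ⟨le_rfl, ?_⟩
      show e i ≤ 0 + w i0
      linarith [he i hi1 hir]
    · simp only [Finset.sum_const, smul_zero, add_zero]
      rw [Finset.sum_ite, hfilter1, hfilter2, Finset.sum_const, smul_zero, zero_add,
        Finset.sum_sub_distrib, Finset.sum_const, hcard, hsum_eq, nsmul_eq_mul]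
      linarith [hkey]
  · rintro W y z ⟨hW0, hy, hz, hsum⟩
    have hzsum : 0 ≤ ∑ i ∈ Finset.Icc 1 r, z i := by
      apply Finset.sum_nonneg
      intro i hi; simp only [Finset.mem_Icc] at hi
      exact (hz i hi.1 hi.2).1
    have hysub : ∑ i ∈ Finset.Icc (k - i0 + 1) k, y i ≤ ∑ i ∈ Finset.Icc 1 k, y i := by
      apply Finset.sum_le_sum_of_subset_of_nonneg
      · intro x hx; simp only [Finset.mem_Icc] at *; omega
      · intro i hi _; simp only [Finset.mem_Icc] at hi
        exact (hy i hi.1 hi.2).1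
    have hylb : S - (i0:ℝ) * W ≤ ∑ i ∈ Finset.Icc (k - i0 + 1) k, y i := by
      have : ∑ i ∈ Finset.Icc (k - i0 + 1) k, (c i - W) ≤ ∑ i ∈ Finset.Icc (k - i0 + 1) k, y i := by
        apply Finset.sum_le_sum
        intro i hi; simp only [Finset.mem_Icc] at hi
        linarith [(hy i (by omega) hi.2).2]
      rwa [Finset.sum_sub_distrib, Finset.sum_const, hcard, hsum_eq, nsmul_eq_mul] at this
    have hfin : S - (i0:ℝ) * W ≤ W + α := by linarith
    have : ((i0:ℝ) + 1) * w i0 ≤ ((i0:ℝ) + 1) * W := by linarith [hkey]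
    have hpos' : (0:ℝ) < (i0:ℝ) + 1 := by positivity
    exact le_of_mul_le_mul_left this hpos'
end

section
/- Consider the linear program: minimize $2 y_3$ over reals $l_1, l_2, y_3$ subject to $3 y_3 = l_1 + l_2$, $l_1 + 2 y_3 \geq -1$, $l_2 + 2 y_3 \geq 2$, $0 \leq y_3 \leq 1$, $l_1 \geq 0$, $l_2 \geq 0$. The optimal value is $4/5$, attained at $(l_1, l_2, y_3) = (0, 6/5, 2/5)$. -/
/-- Feasibility for the dual linear program in dimension 3. -/
def Feasible3 (l1 l2 y3 : ℝ) : Prop :=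
  3 * y3 = l1 + l2 ∧ l1 + 2 * y3 ≥ -1 ∧ l2 + 2 * y3 ≥ 2 ∧
    0 ≤ y3 ∧ y3 ≤ 1 ∧ 0 ≤ l1 ∧ 0 ≤ l2

theorem lp_dim_three :
    Feasible3 0 (6 / 5) (2 / 5) ∧ 2 * (2 / 5 : ℝ) = 4 / 5 ∧
      ∀ l1 l2 y3 : ℝ, Feasible3 l1 l2 y3 → 4 / 5 ≤ 2 * y3 := by
  refine ⟨⟨by norm_num, by norm_num, by norm_num, by norm_num, by norm_num, by norm_num, by norm_num⟩, by norm_num, ?_⟩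
  rintro l1 l2 y3 ⟨h1, h2, h3, h4, h5, h6, h7⟩
  linarith
end
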